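/- Suppose T ∈ L(H) is an absolutely continuous polynomially bounded operator, X ∈ L(H, H²) with X T = S X, Y ∈ L(H², H) with Y S = T Y, and both X and Y have dense range. Then ker X = {0} and ker Y = {0}. -/

import Mathlib

open MeasureTheory Filter Topology

/-- Lemma `lemquasi`: `T` is an a.c. polynomially bounded operator
and `S` the unilateral shift on `H²`; their relevant structure is abstracted: a
type `G` of (outer) functions with calculi `ΦS`, `ΦT`, such that every operator
commuting with `S` with dense range is `ΦS g` for some `g` (commutant of the
shift), `ΦS g` and `ΦT g` are injective (Mlak's theorem for outer functions), and
any intertwining `Y S = T Y` also intertwines the calculi.  If `X T = S X`,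
`Y S = T Y` and `X, Y` have dense range, then `ker X = {0}` and `ker Y = {0}`. -/
theorem stmt_9 {H H2 : Type*} [NormedAddCommGroup H] [InnerProductSpace ℂ H]
    [NormedAddCommGroup H2] [InnerProductSpace ℂ H2]
    (T : H →L[ℂ] H) (S : H2 →L[ℂ] H2)
    (G : Type*) (ΦS : G → H2 →L[ℂ] H2) (ΦT : G → H →L[ℂ] H)
    (hcommutant : ∀ A : H2 →L[ℂ] H2, A.comp S = S.comp A → DenseRange A →
      ∃ g : G, A = ΦS g)
    (hkerS : ∀ g : G, LinearMap.ker (ΦS g : H2 →ₗ[ℂ] H2) = ⊥)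
    (hkerT : ∀ g : G, LinearMap.ker (ΦT g : H →ₗ[ℂ] H) = ⊥)
    (hintertw : ∀ (g : G) (Y : H2 →L[ℂ] H), Y.comp S = T.comp Y →
      Y.comp (ΦS g) = (ΦT g).comp Y)
    (X : H →L[ℂ] H2) (Y : H2 →L[ℂ] H)
    (hX : X.comp T = S.comp X) (hY : Y.comp S = T.comp Y)
    (hXd : DenseRange X) (hYd : DenseRange Y) :
    LinearMap.ker (X : H →ₗ[ℂ] H2) = ⊥ ∧ LinearMap.ker (Y : H2 →ₗ[ℂ] H) = ⊥ := by
  have hcomm : (X.comp Y).comp S = S.comp (X.comp Y) := by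
    rw [ContinuousLinearMap.comp_assoc, hY, ← ContinuousLinearMap.comp_assoc, hX,
      ContinuousLinearMap.comp_assoc]
  have hXYd : DenseRange (X.comp Y) := hXd.comp hYd X.continuous
  obtain ⟨g, hg⟩ := hcommutant _ hcomm hXYd
  have hYg : Y.comp (ΦS g) = (ΦT g).comp Y := hintertw g Y hY
  have hYX : Y.comp X = ΦT g := by
    have h : (Y.comp X).comp Y = (ΦT g).comp Y := by
      rw [ContinuousLinearMap.comp_assoc, hg]; exact hYg
    have heq := hYd.equalizer ((Y.comp X).continuous) ((ΦT g).continuous)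
      (funext fun y => DFunLike.congr_fun h y)
    ext x
    exact congrFun heq x
  constructor
  · rw [eq_bot_iff]
    intro h hh
    have : (Y.comp X) h = 0 := by simp [(show X h = 0 from LinearMap.mem_ker.mp hh)]
    rw [hYX] at this
    have := (hkerT g) ▸ LinearMap.mem_ker.mpr this
    simpa using this
  · rw [eq_bot_iff]
    intro h hh
    have : (X.comp Y) h = 0 := by simp [(show Y h = 0 from LinearMap.mem_ker.mp hh)]
    rw [hg] at this
    have := (hkerS g) ▸ LinearMap.mem_ker.mpr this
    simpa using this
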